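/- The index k* has the following properties: (1) P̄_{k*}|h_{k*}|² ≤ η̃_{k*}, and if k* < K also η̃_{k*} ≤ P̄_{k*+1}|h_{k*+1}|²; (2) P̄_k|h_k|² ≤ η̃_{k−1} for every k with 2 ≤ k ≤ k*, and P̄_k|h_k|² ≥ η̃_{k−1} for every k with k*+1 ≤ k ≤ K and k ≥ 2; (3) η̃_{k*} ≤ η̃_j for every 1 ≤ j ≤ K, i.e., k* minimizes k ↦ η̃_k. (Lemma 3) -/
import Mathlib

private lemma sq_le_sq_iff'' {a b : ℝ} (ha : 0 ≤ a) (hb : 0 ≤ b) : a^2 ≤ b^2 ↔ a ≤ b := by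
  constructor <;> intro h <;> nlinarith

private lemma sq_lt_sq_iff'' {a b : ℝ} (ha : 0 ≤ a) (hb : 0 ≤ b) : a^2 < b^2 ↔ a < b := by
  constructor <;> intro h <;> nlinarith

private lemma quad_dec {A S u v : ℝ} (hA : 0 < A) (hv : S / A ≤ v) (huv : v < u) :
    A * v^2 - 2*S*v < A * u^2 - 2*S*u := by
  have h1 : S ≤ A * v := by
    rw [div_le_iff₀ hA] at hv; linarith
  nlinarith [mul_pos (sub_pos.mpr huv) (show 0 < A*(u+v) - 2*S by nlinarith)]

private lemma quad_inc {A S u v : ℝ} (hA : 0 < A) (hu : u ≤ S / A) (hvu : v < u) :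
    A * u^2 - 2*S*u < A * v^2 - 2*S*v := by
  have h1 : A * u ≤ S := by
    rw [le_div_iff₀ hA] at hu; linarith
  nlinarith [mul_pos (sub_pos.mpr hvu) (show 0 < 2*S - A*(u+v) by nlinarith)]

private lemma mediant {Sk y x m : ℝ} (hSk : 0 < Sk) (hy : 0 < y)
    (hmed : m * (Sk + y) = x * Sk + y * y) :
    (y ≤ m → m ≤ x ∧ y ≤ x) ∧ (x ≤ y → x ≤ m ∧ m ≤ y) ∧
    (m < y → x < m) ∧ (y < x → y < m ∧ m ≤ x) := by
  refine ⟨fun hc => ?_, fun hc => ?_, fun hc => ?_, fun hc => ?_⟩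
  · have h1 : m ≤ x := by nlinarith [mul_nonneg (sub_nonneg.mpr hc) hy.le]
    exact ⟨h1, hc.trans h1⟩
  · constructor
    · nlinarith [mul_nonneg (sub_nonneg.mpr hc) hy.le, add_pos hSk hy]
    · nlinarith [mul_nonneg (sub_nonneg.mpr hc) hSk.le, add_pos hSk hy]
  · nlinarith [mul_pos (sub_pos.mpr hc) hy]
  · constructor
    · nlinarith [mul_pos (sub_pos.mpr hc) hSk, add_pos hSk hy]
    · nlinarith [mul_pos (sub_pos.mpr hc) hy, add_pos hSk hy]

theorem stmt4
    (K : ℕ) (hK : 1 ≤ K) (P h : ℕ → ℝ) (σ2 : ℝ)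
    (hP : ∀ k, 1 ≤ k → k ≤ K → 0 < P k)
    (hh : ∀ k, 1 ≤ k → k ≤ K → 0 < h k)
    (hσ2 : 0 < σ2)
    (hord : ∀ k, 1 ≤ k → k < K → P k * (h k) ^ 2 ≤ P (k + 1) * (h (k + 1)) ^ 2)
    (S ηt : ℕ → ℝ) (F : ℕ → ℝ → ℝ)
    (hS : ∀ k, S k = ∑ i ∈ Finset.Icc 1 k, Real.sqrt (P i) * h i)
    (hηt : ∀ k, ηt k = ((σ2 + ∑ i ∈ Finset.Icc 1 k, P i * (h i) ^ 2) / S k) ^ 2)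
    (hF : ∀ k η, F k η =
      (∑ i ∈ Finset.Icc 1 k, (Real.sqrt (P i) * h i / Real.sqrt η - 1) ^ 2) + σ2 / η)
    (ηcl : ℕ → ℝ)
    (hηcl : ∀ k, 1 ≤ k → k < K →
      ηcl k = min (P (k + 1) * (h (k + 1)) ^ 2) (max (ηt k) (P k * (h k) ^ 2)))
    (hηclK : ηcl K = max (ηt K) (P K * (h K) ^ 2))
    (kstar : ℕ) (hk1 : 1 ≤ kstar) (hk2 : kstar ≤ K)
    (hkmin : ∀ j, 1 ≤ j → j ≤ K → F kstar (ηcl kstar) ≤ F j (ηcl j)) :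
    -- (1)
    (P kstar * (h kstar) ^ 2 ≤ ηt kstar ∧
      (kstar < K → ηt kstar ≤ P (kstar + 1) * (h (kstar + 1)) ^ 2)) ∧
    -- (2)
    ((∀ k, 2 ≤ k → k ≤ kstar → P k * (h k) ^ 2 ≤ ηt (k - 1)) ∧
     (∀ k, 2 ≤ k → kstar + 1 ≤ k → k ≤ K → ηt (k - 1) ≤ P k * (h k) ^ 2)) ∧
    -- (3)
    (∀ j, 1 ≤ j → j ≤ K → ηt kstar ≤ ηt j) := by
  -- basic positivity
  have hG : ∀ k, 1 ≤ k → k ≤ K → 0 < P k * h k ^ 2 := fun k a b =>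
    mul_pos (hP k a b) (pow_pos (hh k a b) 2)
  have hs : ∀ k, 1 ≤ k → k ≤ K → 0 < Real.sqrt (P k) * h k := fun k a b =>
    mul_pos (Real.sqrt_pos.mpr (hP k a b)) (hh k a b)
  have hssq : ∀ k, 1 ≤ k → k ≤ K → (Real.sqrt (P k) * h k) ^ 2 = P k * h k ^ 2 := by
    intro k a b; rw [mul_pow, Real.sq_sqrt (hP k a b).le]
  have hsqrtG : ∀ k, 1 ≤ k → k ≤ K → Real.sqrt (P k * h k ^ 2) = Real.sqrt (P k) * h k := by
    intro k a b; rw [← hssq k a b, Real.sqrt_sq (hs k a b).le]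
  have hSpos : ∀ k, 1 ≤ k → k ≤ K → 0 < S k := by
    intro k a b
    rw [hS]
    apply Finset.sum_pos
    · intro i hi
      rw [Finset.mem_Icc] at hi
      exact hs i hi.1 (hi.2.trans b)
    · exact ⟨1, Finset.mem_Icc.mpr ⟨le_refl 1, a⟩⟩
  have hApos : ∀ k, k ≤ K → 0 < σ2 + ∑ i ∈ Finset.Icc 1 k, P i * h i ^ 2 := by
    intro k b
    have : (0:ℝ) ≤ ∑ i ∈ Finset.Icc 1 k, P i * h i ^ 2 :=
      Finset.sum_nonneg fun i hi => by
        rw [Finset.mem_Icc] at hi; exact (hG i hi.1 (hi.2.trans b)).le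
    linarith
  have hηtpos : ∀ k, 1 ≤ k → k ≤ K → 0 < ηt k := by
    intro k a b
    rw [hηt]
    exact pow_pos (div_pos (hApos k b) (hSpos k a b)) 2
  -- recurrences
  have hSrec : ∀ k : ℕ, S (k+1) = S k + Real.sqrt (P (k+1)) * h (k+1) := by
    intro k
    rw [hS, hS, Finset.sum_Icc_succ_top (by omega : 1 ≤ k + 1)]
  have hArec : ∀ k : ℕ, (σ2 + ∑ i ∈ Finset.Icc 1 (k+1), P i * h i ^ 2)
      = (σ2 + ∑ i ∈ Finset.Icc 1 k, P i * h i ^ 2) + P (k+1) * h (k+1) ^ 2 := by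
    intro k
    rw [Finset.sum_Icc_succ_top (by omega : 1 ≤ k + 1)]; ring
  -- the key mediant facts
  have key : ∀ k, 1 ≤ k → k < K →
      (P (k+1) * h (k+1) ^ 2 ≤ ηt (k+1) → ηt (k+1) ≤ ηt k ∧ P (k+1) * h (k+1) ^ 2 ≤ ηt k) ∧
      (ηt k ≤ P (k+1) * h (k+1) ^ 2 → ηt k ≤ ηt (k+1) ∧ ηt (k+1) ≤ P (k+1) * h (k+1) ^ 2) ∧
      (ηt (k+1) < P (k+1) * h (k+1) ^ 2 → ηt k < ηt (k+1)) ∧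
      (P (k+1) * h (k+1) ^ 2 < ηt k → P (k+1) * h (k+1) ^ 2 < ηt (k+1) ∧ ηt (k+1) ≤ ηt k) := by
    intro k a b
    obtain ⟨y, hy⟩ : ∃ y, y = Real.sqrt (P (k+1)) * h (k+1) := ⟨_, rfl⟩
    obtain ⟨x, hx⟩ : ∃ x, x = (σ2 + ∑ i ∈ Finset.Icc 1 k, P i * h i ^ 2) / S k := ⟨_, rfl⟩
    obtain ⟨m, hm⟩ : ∃ m, m = (σ2 + ∑ i ∈ Finset.Icc 1 (k+1), P i * h i ^ 2) / S (k+1) := ⟨_, rfl⟩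
    have hSkpos : 0 < S k := hSpos k a (le_of_lt b)
    have hypos : 0 < y := hy ▸ hs (k+1) (by omega) b
    have hxpos : 0 < x := hx ▸ div_pos (hApos k b.le) hSkpos
    have hmpos : 0 < m := hm ▸ div_pos (hApos (k+1) b) (hSpos (k+1) (by omega) b)
    have hA_eq : σ2 + ∑ i ∈ Finset.Icc 1 k, P i * h i ^ 2 = x * S k := by
      rw [hx, div_mul_cancel₀ _ (ne_of_gt hSkpos)]
    have hmm : m = (x * S k + y * y) / (S k + y) := by
      rw [hm, hArec, hSrec, hA_eq, ← hy]
      congr 1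
      rw [hy, ← hssq (k+1) (by omega) b]
      ring
    have hmed : m * (S k + y) = x * S k + y * y := by
      rw [hmm, div_mul_cancel₀ _ (ne_of_gt (add_pos hSkpos hypos))]
    obtain ⟨M1, M2, M3, M4⟩ := mediant hSkpos hypos hmed
    have hηtk : ηt k = x ^ 2 := by rw [hηt, hx]
    have hηtk1 : ηt (k+1) = m ^ 2 := by rw [hηt, hm]
    have hGk1 : P (k+1) * h (k+1) ^ 2 = y ^ 2 := by rw [hy, hssq (k+1) (by omega) b]
    rw [hηtk, hηtk1, hGk1]
    refine ⟨fun hc => ?_, fun hc => ?_, fun hc => ?_, fun hc => ?_⟩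
    · obtain ⟨r1, r2⟩ := M1 ((sq_le_sq_iff'' hypos.le hmpos.le).mp hc)
      exact ⟨(sq_le_sq_iff'' hmpos.le hxpos.le).mpr r1, (sq_le_sq_iff'' hypos.le hxpos.le).mpr r2⟩
    · obtain ⟨r1, r2⟩ := M2 ((sq_le_sq_iff'' hxpos.le hypos.le).mp hc)
      exact ⟨(sq_le_sq_iff'' hxpos.le hmpos.le).mpr r1, (sq_le_sq_iff'' hmpos.le hypos.le).mpr r2⟩
    · exact (sq_lt_sq_iff'' hxpos.le hmpos.le).mpr (M3 ((sq_lt_sq_iff'' hmpos.le hypos.le).mp hc))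
    · obtain ⟨r1, r2⟩ := M4 ((sq_lt_sq_iff'' hypos.le hxpos.le).mp hc)
      exact ⟨(sq_lt_sq_iff'' hypos.le hmpos.le).mpr r1, (sq_le_sq_iff'' hmpos.le hxpos.le).mpr r2⟩
  -- F recurrence
  have hFrec : ∀ (k : ℕ) (η : ℝ),
      F (k+1) η = F k η + (Real.sqrt (P (k+1)) * h (k+1) / Real.sqrt η - 1) ^ 2 := by
    intro k η
    rw [hF, hF, Finset.sum_Icc_succ_top (by omega : 1 ≤ k + 1)]
    ring
  -- F equality at the junction point
  have hFeqG : ∀ k : ℕ, k + 1 ≤ K →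
      F (k+1) (P (k+1) * h (k+1) ^ 2) = F k (P (k+1) * h (k+1) ^ 2) := by
    intro k hkK
    rw [hFrec, hsqrtG (k+1) (by omega) hkK,
        div_self (ne_of_gt (hs (k+1) (by omega) hkK))]
    norm_num
  -- closed form of F
  have hFclosed : ∀ k, 1 ≤ k → k ≤ K → ∀ η : ℝ, 0 < η →
      F k η = (σ2 + ∑ i ∈ Finset.Icc 1 k, P i * h i ^ 2) * (1 / Real.sqrt η) ^ 2
        - 2 * S k * (1 / Real.sqrt η) + k := by
    intro k a b η hη
    have hsη : 0 < Real.sqrt η := Real.sqrt_pos.mpr hη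
    have hu2 : (1 / Real.sqrt η) ^ 2 = 1 / η := by
      rw [div_pow, one_pow, Real.sq_sqrt hη.le]
    have expand : ∀ i ∈ Finset.Icc 1 k, (Real.sqrt (P i) * h i / Real.sqrt η - 1) ^ 2
        = (P i * h i ^ 2) * (1 / Real.sqrt η) ^ 2
          - 2 * (Real.sqrt (P i) * h i) * (1 / Real.sqrt η) + 1 := by
      intro i hi
      rw [Finset.mem_Icc] at hi
      have e1 : Real.sqrt (P i) * h i / Real.sqrt η
          = (Real.sqrt (P i) * h i) * (1 / Real.sqrt η) := by ring
      rw [e1, ← hssq i hi.1 (hi.2.trans b)]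
      ring
    rw [hF, Finset.sum_congr rfl expand]
    rw [Finset.sum_add_distrib, Finset.sum_sub_distrib, ← Finset.sum_mul, ← Finset.sum_mul]
    rw [Finset.sum_const, Nat.card_Icc]
    simp only [nsmul_eq_mul, Nat.add_sub_cancel, mul_one]
    rw [← Finset.mul_sum, ← hS]
    have : σ2 / η = σ2 * (1 / Real.sqrt η) ^ 2 := by rw [hu2]; ring
    rw [this]
    ring
  -- monotonicity of F
  have Fdec : ∀ k η1 η2, 1 ≤ k → k ≤ K → 0 < η1 → η1 < η2 → η2 ≤ ηt k →
      F k η2 < F k η1 := by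
    intro k η1 η2 a b h1 h12 h2t
    have hη2 : 0 < η2 := h1.trans h12
    have hA := hApos k b
    have hSp := hSpos k a b
    have hsqηt : Real.sqrt (ηt k) = (σ2 + ∑ i ∈ Finset.Icc 1 k, P i * h i ^ 2) / S k := by
      rw [hηt, Real.sqrt_sq (div_pos hA hSp).le]
    have h1p : 0 < Real.sqrt η1 := Real.sqrt_pos.mpr h1
    have h2p : 0 < Real.sqrt η2 := Real.sqrt_pos.mpr hη2
    have hb2 : Real.sqrt η2 ≤ (σ2 + ∑ i ∈ Finset.Icc 1 k, P i * h i ^ 2) / S k := by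
      rw [← hsqηt]; exact Real.sqrt_le_sqrt h2t
    have hvge : S k / (σ2 + ∑ i ∈ Finset.Icc 1 k, P i * h i ^ 2) ≤ 1 / Real.sqrt η2 := by
      have := one_div_le_one_div_of_le h2p hb2
      rwa [one_div_div] at this
    have huv : 1 / Real.sqrt η2 < 1 / Real.sqrt η1 :=
      one_div_lt_one_div_of_lt h1p (Real.sqrt_lt_sqrt h1.le h12)
    have := quad_dec hA hvge huv
    rw [hFclosed k a b η1 h1, hFclosed k a b η2 hη2]
    linarith
  have Finc : ∀ k η1 η2, 1 ≤ k → k ≤ K → ηt k ≤ η1 → η1 < η2 →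
      F k η1 < F k η2 := by
    intro k η1 η2 a b h1t h12
    have hη1 : 0 < η1 := lt_of_lt_of_le (hηtpos k a b) h1t
    have hη2 : 0 < η2 := hη1.trans h12
    have hA := hApos k b
    have hSp := hSpos k a b
    have hsqηt : Real.sqrt (ηt k) = (σ2 + ∑ i ∈ Finset.Icc 1 k, P i * h i ^ 2) / S k := by
      rw [hηt, Real.sqrt_sq (div_pos hA hSp).le]
    have h1p : 0 < Real.sqrt η1 := Real.sqrt_pos.mpr hη1
    have hb1 : (σ2 + ∑ i ∈ Finset.Icc 1 k, P i * h i ^ 2) / S k ≤ Real.sqrt η1 := by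
      rw [← hsqηt]; exact Real.sqrt_le_sqrt h1t
    have hule : 1 / Real.sqrt η1 ≤ S k / (σ2 + ∑ i ∈ Finset.Icc 1 k, P i * h i ^ 2) := by
      have := one_div_le_one_div_of_le (div_pos hA hSp) hb1
      rwa [one_div_div] at this
    have hvu : 1 / Real.sqrt η2 < 1 / Real.sqrt η1 :=
      one_div_lt_one_div_of_lt h1p (Real.sqrt_lt_sqrt hη1.le h12)
    have := quad_inc hA hule hvu
    rw [hFclosed k a b η1 hη1, hFclosed k a b η2 hη2]
    linarith
  -- base fact: G 1 < ηt 1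
  have G1lt : P 1 * h 1 ^ 2 < ηt 1 := by
    have hy := hs 1 le_rfl hK
    have hS1 : S 1 = Real.sqrt (P 1) * h 1 := by
      rw [hS]; simp
    have hsum : ∑ i ∈ Finset.Icc 1 1, P i * h i ^ 2 = P 1 * h 1 ^ 2 := by simp
    rw [hηt, hS1, hsum, ← hssq 1 le_rfl hK]
    rw [sq_lt_sq_iff'' hy.le (div_nonneg (by positivity) hy.le)]
    rw [lt_div_iff₀ hy]
    nlinarith [sq_nonneg (Real.sqrt (P 1) * h 1)]
  -- descent: any minimizer m satisfies G m ≤ ηt m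
  have desc : ∀ m, 1 ≤ m → m ≤ K →
      (∀ j, 1 ≤ j → j ≤ K → F m (ηcl m) ≤ F j (ηcl j)) → P m * h m ^ 2 ≤ ηt m := by
    intro m
    induction m using Nat.strong_induction_on with
    | _ m ih =>
      intro hm1 hmK hmin
      by_contra hcon
      push_neg at hcon
      match m, hm1, hmK, hmin, hcon, ih with
      | 1, hm1, hmK, hmin, hcon, ih => linarith
      | (n+2), hm1, hmK, hmin, hcon, ih =>
        set n' := n + 1 with hn'
        have hn1 : 1 ≤ n' := by omega
        have hnK : n' < K := by omega
        obtain ⟨_, _, k3, _⟩ := key n' hn1 hnK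
        have hlt : ηt n' < ηt (n'+1) := k3 hcon
        have hltG : ηt n' < P (n'+1) * h (n'+1) ^ 2 := hlt.trans hcon
        -- ηcl (n'+1) = G (n'+1)
        have hcl : ηcl (n'+1) = P (n'+1) * h (n'+1) ^ 2 := by
          by_cases hK' : n' + 1 < K
          · rw [hηcl (n'+1) (by omega) hK', max_eq_right hcon.le,
                min_eq_right (hord (n'+1) (by omega) hK')]
          · have e : n' + 1 = K := by omega
            rw [e] at hcon ⊢
            rw [hηclK, max_eq_right hcon.le]
        have hFeq : F (n'+1) (P (n'+1) * h (n'+1) ^ 2) = F n' (P (n'+1) * h (n'+1) ^ 2) :=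
          hFeqG n' hmK
        have hclncases : ηcl n' = min (P (n'+1) * h (n'+1) ^ 2) (max (ηt n') (P n' * h n' ^ 2)) :=
          hηcl n' hn1 hnK
        have hcle : ηcl n' ≤ P (n'+1) * h (n'+1) ^ 2 := by
          rw [hclncases]; exact min_le_left _ _
        have hcge : ηt n' ≤ ηcl n' := by
          rw [hclncases]; exact le_min hltG.le (le_max_left _ _)
        rcases eq_or_lt_of_le hcle with heq | hltc
        · -- tie case: ηcl n' = G (n'+1); then G n' = G (n'+1) and n' is also a minimizer
          have h5 : min (P (n'+1) * h (n'+1) ^ 2) (max (ηt n') (P n' * h n' ^ 2))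
              = P (n'+1) * h (n'+1) ^ 2 := by rw [← hclncases, heq]
          have hmax : P (n'+1) * h (n'+1) ^ 2 ≤ max (ηt n') (P n' * h n' ^ 2) :=
            min_eq_left_iff.mp h5
          have hGeq : P (n'+1) * h (n'+1) ^ 2 ≤ P n' * h n' ^ 2 := by
            rcases le_max_iff.mp hmax with hc | hc
            · linarith
            · exact hc
          have hminn : ∀ j, 1 ≤ j → j ≤ K → F n' (ηcl n') ≤ F j (ηcl j) := by
            intro j hj1 hj2
            have e : F n' (ηcl n') = F (n'+1) (ηcl (n'+1)) := by
              rw [heq, hcl, hFeq]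
            rw [e]; exact hmin j hj1 hj2
          have hd := ih n' (by omega) hn1 (by omega) hminn
          have : ηt n' < P n' * h n' ^ 2 := lt_of_lt_of_le hltG hGeq
          linarith
        · -- strict case: contradiction with minimality
          have hFlt : F n' (ηcl n') < F n' (P (n'+1) * h (n'+1) ^ 2) :=
            Finc n' (ηcl n') _ hn1 (le_of_lt hnK) hcge hltc
          have hmle := hmin n' hn1 hnK.le
          rw [hcl, hFeq] at hmle
          linarith
  -- ascent: any minimizer m < K satisfies ηt m ≤ G (m+1)
  have asc : ∀ d m, 1 ≤ m → m < K → K - m ≤ d →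
      (∀ j, 1 ≤ j → j ≤ K → F m (ηcl m) ≤ F j (ηcl j)) →
      ηt m ≤ P (m+1) * h (m+1) ^ 2 := by
    intro d
    induction d with
    | zero => intro m h1 h2 h3 _; omega
    | succ d ihd =>
      intro m hm1 hmK hfuel hmin
      by_contra hcon
      push_neg at hcon
      obtain ⟨_, _, _, k4⟩ := key m hm1 hmK
      obtain ⟨hlt1, hle2⟩ := k4 hcon
      have hcl : ηcl m = P (m+1) * h (m+1) ^ 2 := by
        rw [hηcl m hm1 hmK,
            max_eq_left (le_of_lt (lt_of_le_of_lt (hord m hm1 hmK) hcon)),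
            min_eq_left hcon.le]
      have hFeq : F m (P (m+1) * h (m+1) ^ 2) = F (m+1) (P (m+1) * h (m+1) ^ 2) :=
        (hFeqG m hmK).symm
      by_cases hK' : m + 1 < K
      · have hclm1 : ηcl (m+1) = min (P (m+2) * h (m+2) ^ 2) (ηt (m+1)) := by
          rw [hηcl (m+1) (by omega) hK', max_eq_left hlt1.le]
        have hcle : ηcl (m+1) ≤ ηt (m+1) := by
          rw [hclm1]; exact min_le_right _ _
        have hcge : P (m+1) * h (m+1) ^ 2 ≤ ηcl (m+1) := by
          rw [hclm1]; exact le_min (hord (m+1) (by omega) hK') hlt1.le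
        rcases eq_or_lt_of_le hcge with heq | hltc
        · -- tie case: m+1 is also a minimizer with the same property
          have hminn : ∀ j, 1 ≤ j → j ≤ K → F (m+1) (ηcl (m+1)) ≤ F j (ηcl j) := by
            intro j hj1 hj2
            have e : F (m+1) (ηcl (m+1)) = F m (ηcl m) := by
              rw [← heq, hcl, hFeq]
            rw [e]; exact hmin j hj1 hj2
          have hnext := ihd (m+1) (by omega) hK' (by omega) hminn
          -- ηt (m+1) ≤ G (m+2); but ηcl (m+1) = G (m+1) < ηt (m+1) forces G (m+2) = G (m+1)
          have hg2 : P (m+2) * h (m+2) ^ 2 ≤ P (m+1) * h (m+1) ^ 2 := by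
            rcases min_cases (P (m+2) * h (m+2) ^ 2) (ηt (m+1)) with ⟨h5, h6⟩ | ⟨h5, h6⟩
            · rw [hclm1, h5] at heq
              exact le_of_eq heq.symm
            · rw [hclm1, h5] at heq
              linarith
          linarith
        · have hFlt : F (m+1) (ηcl (m+1)) < F (m+1) (P (m+1) * h (m+1) ^ 2) :=
            Fdec (m+1) _ _ (by omega) (le_of_lt hK') (hG (m+1) (by omega) hK'.le) hltc hcle
          have hmle := hmin (m+1) (by omega) (le_of_lt hK')
          rw [hcl, hFeq] at hmle
          linarith
      · -- m + 1 = K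
        have e : m + 1 = K := by omega
        have hlt1' := hlt1
        rw [e] at hlt1'
        have hclK : ηcl (m+1) = ηt (m+1) := by
          rw [e, hηclK, max_eq_left hlt1'.le]
        have hFlt : F (m+1) (ηcl (m+1)) < F (m+1) (P (m+1) * h (m+1) ^ 2) := by
          rw [hclK]
          exact Fdec (m+1) _ _ (by omega) (by omega) (hG (m+1) (by omega) (by omega)) hlt1 le_rfl
        have hmle := hmin (m+1) (by omega) (by omega)
        rw [hcl, hFeq] at hmle
        linarith
  -- property (1)
  have h1a : P kstar * h kstar ^ 2 ≤ ηt kstar := desc kstar hk1 hk2 hkmin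
  have h1b : kstar < K → ηt kstar ≤ P (kstar + 1) * h (kstar + 1) ^ 2 := fun hlt =>
    asc K kstar hk1 hlt (by omega) hkmin
  -- downward propagation
  have down : ∀ d k, 1 ≤ k → k ≤ kstar → kstar - k ≤ d →
      P k * h k ^ 2 ≤ ηt k ∧ ηt kstar ≤ ηt k := by
    intro d
    induction d with
    | zero =>
      intro k a b c
      have : k = kstar := by omega
      subst this
      exact ⟨h1a, le_rfl⟩
    | succ d ihd =>
      intro k a b c
      rcases eq_or_lt_of_le b with he | hlt
      · subst he
        exact ⟨h1a, le_rfl⟩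
      · have hkK : k < K := lt_of_lt_of_le hlt hk2
        obtain ⟨hg1, hm1⟩ := ihd (k+1) (by omega) (by omega) (by omega)
        obtain ⟨kk1, _, _, _⟩ := key k a hkK
        obtain ⟨h5, h6⟩ := kk1 hg1
        exact ⟨le_trans (hord k a hkK) h6, le_trans hm1 h5⟩
  -- upward propagation
  have up : ∀ k, kstar ≤ k → k ≤ K → ηt kstar ≤ ηt k ∧ (k < K → ηt k ≤ P (k+1) * h (k+1) ^ 2) := by
    intro k hk
    induction k, hk using Nat.le_induction with
    | base => intro _; exact ⟨le_rfl, h1b⟩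
    | succ k hk ihk =>
      intro hk1K
      have hkK : k < K := by omega
      obtain ⟨ha, hb⟩ := ihk (by omega)
      have hb' := hb hkK
      obtain ⟨_, kk2, _, _⟩ := key k (le_trans hk1 hk) hkK
      obtain ⟨h5, h6⟩ := kk2 hb'
      exact ⟨le_trans ha h5, fun hlt => le_trans h6 (hord (k+1) (by omega) hlt)⟩
  -- assemble
  refine ⟨⟨h1a, h1b⟩, ⟨?_, ?_⟩, ?_⟩
  · intro k h2k hkk
    obtain ⟨hg, _⟩ := down kstar k (by omega) hkk (by omega)
    have hk1K : k - 1 < K := by omega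
    obtain ⟨kk1, _, _, _⟩ := key (k-1) (by omega) hk1K
    rw [show k - 1 + 1 = k from by omega] at kk1
    exact (kk1 hg).2
  · intro k h2k hks hkK
    obtain ⟨_, hb⟩ := up (k-1) (by omega) (by omega)
    have hres := hb (by omega)
    rw [show k - 1 + 1 = k from by omega] at hres
    exact hres
  · intro j hj1 hjK
    rcases le_or_gt j kstar with hle | hlt
    · exact (down kstar j hj1 hle (by omega)).2
    · exact (up j hlt.le hjK).1
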